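/- An r×n ρ-latin rectangle L on symbols [k] can be completed to an n×n ρ-latin square if and only if ρ_ℓ − e_ℓ ≤ n − r for all ℓ ∈ [k] and, for every subset J of the n columns, |J|(n − r) ≤ Σ_{ℓ∈[k]} min{ρ_ℓ − e_ℓ, μ_J(ℓ)}, where μ_J(ℓ) is the number of columns in J missing symbol ℓ. -/

import Mathlib

open Finset

/-- `L` is a (partial) latin array: each symbol occurs at most once in each
row and at most once in each column. -/
def latinArr {r s k : ℕ} (L : Fin r → Fin s → Fin k) : Prop :=
  (∀ i, Function.Injective (L i)) ∧ (∀ j, Function.Injective (fun i => L i j))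

/-- Number of occurrences of symbol `ℓ` in `L`. -/
def symCount {r s k : ℕ} (L : Fin r → Fin s → Fin k) (ℓ : Fin k) : ℕ :=
  ((univ : Finset (Fin r × Fin s)).filter (fun p => L p.1 p.2 = ℓ)).card

/-- `μ_I(ℓ)`: number of rows in `I` in which symbol `ℓ` is missing. -/
def muRows {r s k : ℕ} (L : Fin r → Fin s → Fin k) (I : Finset (Fin r)) (ℓ : Fin k) : ℕ :=
  (I.filter (fun i => ∀ j, L i j ≠ ℓ)).card

/-- `μ_J(ℓ)`: number of columns in `J` in which symbol `ℓ` is missing. -/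
def muCols {r s k : ℕ} (L : Fin r → Fin s → Fin k) (J : Finset (Fin s)) (ℓ : Fin k) : ℕ :=
  (J.filter (fun j => ∀ i, L i j ≠ ℓ)).card

/-- `μ_K(i)` for a row `i`: number of symbols of `K` missing in row `i`. -/
def muSymRow {r s k : ℕ} (L : Fin r → Fin s → Fin k) (K : Finset (Fin k)) (i : Fin r) : ℕ :=
  (K.filter (fun ℓ => ∀ j, L i j ≠ ℓ)).card

/-- `μ_K(j)` for a column `j`: number of symbols of `K` missing in column `j`. -/
def muSymCol {r s k : ℕ} (L : Fin r → Fin s → Fin k) (K : Finset (Fin k)) (j : Fin s) : ℕ :=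
  (K.filter (fun ℓ => ∀ i, L i j ≠ ℓ)).card

/-- `S` is an `n × n` `ρ`-latin square. -/
def rhoLatinSquare {n k : ℕ} (ρ : Fin k → ℕ) (S : Fin n → Fin n → Fin k) : Prop :=
  latinArr S ∧ ∀ ℓ, symCount S ℓ = ρ ℓ

/-- `S` extends `L` on the top-left `r × s` corner. -/
def extends' {r s n k : ℕ} (hr : r ≤ n) (hs : s ≤ n)
    (L : Fin r → Fin s → Fin k) (S : Fin n → Fin n → Fin k) : Prop :=
  ∀ i j, S (Fin.castLE hr i) (Fin.castLE hs j) = L i j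


section Aux

variable {ι α : Type*} [Fintype ι] [Fintype α] [DecidableEq ι] [DecidableEq α]

/-- degree of ℓ into J through allowed sets A -/
def gmu (A : ι → Finset α) (J : Finset ι) (ℓ : α) : ℕ :=
  (J.filter (fun j => ℓ ∈ A j)).card

lemma gmu_mono (A : ι → Finset α) {J J' : Finset ι} (h : J ⊆ J') (ℓ : α) :
    gmu A J ℓ ≤ gmu A J' ℓ :=
  card_le_card (filter_subset_filter _ h)

lemma gmu_modular (A : ι → Finset α) (J J' : Finset ι) (ℓ : α) :
    gmu A (J ∪ J') ℓ + gmu A (J ∩ J') ℓ = gmu A J ℓ + gmu A J' ℓ := by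
  unfold gmu
  rw [filter_union, filter_inter_distrib]
  exact card_union_add_card_inter _ _

/-- Gale's theorem for bipartite transportation with unit capacities. -/
theorem gale : ∀ (N : ℕ) (b : ι → ℕ) (d : α → ℕ) (A : ι → Finset α),
    (∑ j, b j = N) → (∑ ℓ, d ℓ = N) →
    (∀ J : Finset ι, ∑ j ∈ J, b j ≤ ∑ ℓ, min (d ℓ) (gmu A J ℓ)) →
    ∃ w : ι → Finset α, (∀ j, w j ⊆ A j) ∧ (∀ j, (w j).card = b j) ∧
      (∀ ℓ, (univ.filter (fun j => ℓ ∈ w j)).card = d ℓ) := by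
  intro N
  induction N with
  | zero =>
    intro b d A hb hd _
    refine ⟨fun _ => ∅, fun j => empty_subset _, fun j => ?_, fun ℓ => ?_⟩
    · have : b j = 0 := by
        by_contra h
        have : 0 < ∑ j, b j := sum_pos' (fun _ _ => Nat.zero_le _) ⟨j, mem_univ j, Nat.pos_of_ne_zero h⟩
        omega
      simp [this]
    · have : d ℓ = 0 := by
        by_contra h
        have : 0 < ∑ ℓ, d ℓ := sum_pos' (fun _ _ => Nat.zero_le _) ⟨ℓ, mem_univ ℓ, Nat.pos_of_ne_zero h⟩
        omega
      simp [this]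
  | succ N ih =>
    intro b d A hb hd hcond
    -- pick a column with positive demand
    obtain ⟨j₀, hj₀⟩ : ∃ j₀, 0 < b j₀ := by
      by_contra h
      push_neg at h
      have : ∑ j, b j = 0 := sum_eq_zero (fun j _ => by have := h j; omega)
      omega
    -- tight sets avoiding j₀
    set tight : Finset ι → Prop := fun J => ∑ j ∈ J, b j = ∑ ℓ, min (d ℓ) (gmu A J ℓ) with htight
    classical
    have hunion : ∀ J, (j₀ ∉ J ∧ tight J) → ∀ J', (j₀ ∉ J' ∧ tight J') →
        (j₀ ∉ J ∪ J' ∧ tight (J ∪ J')) := by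
      rintro J ⟨hJn, hJt⟩ J' ⟨hJ'n, hJ't⟩
      refine ⟨by simp [hJn, hJ'n], ?_⟩
      have hsub : ∑ ℓ, min (d ℓ) (gmu A (J ∪ J') ℓ) + ∑ ℓ, min (d ℓ) (gmu A (J ∩ J') ℓ) ≤
          ∑ ℓ, min (d ℓ) (gmu A J ℓ) + ∑ ℓ, min (d ℓ) (gmu A J' ℓ) := by
        rw [← sum_add_distrib, ← sum_add_distrib]
        refine sum_le_sum (fun ℓ _ => ?_)
        have h1 := gmu_modular A J J' ℓ
        have h2 := gmu_mono A (show J ∩ J' ⊆ J from inter_subset_left) ℓ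
        have h3 := gmu_mono A (show J ⊆ J ∪ J' from subset_union_left) ℓ
        omega
      have hbm : ∑ j ∈ J ∪ J', b j + ∑ j ∈ J ∩ J', b j = ∑ j ∈ J, b j + ∑ j ∈ J', b j :=
        sum_union_inter
      have hc1 := hcond (J ∪ J')
      have hc2 := hcond (J ∩ J')
      simp only [htight] at hJt hJ't ⊢
      omega
    obtain ⟨J₀, hJ₀, hJ₀max⟩ : ∃ J₀ : Finset ι, (j₀ ∉ J₀ ∧ tight J₀) ∧
        ∀ J, j₀ ∉ J → tight J → J ⊆ J₀ := by
      refine ⟨(univ.filter (fun J => j₀ ∉ J ∧ tight J)).sup id, ?_, ?_⟩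
      · have hbot : j₀ ∉ (∅ : Finset ι) ∧ tight ∅ :=
          ⟨notMem_empty _, by simp [htight, gmu]⟩
        exact sup_induction (p := fun J => j₀ ∉ J ∧ tight J) hbot
          (fun a ha b hb => hunion a ha b hb) (fun J hJ => (mem_filter.mp hJ).2)
      · intro J h1 h2
        have hmem : J ∈ univ.filter (fun J => j₀ ∉ J ∧ tight J) :=
          mem_filter.mpr ⟨mem_univ _, h1, h2⟩
        exact le_sup (f := id) hmem
    -- find the symbol ℓ₀
    have hstep : ∑ ℓ, min (d ℓ) (gmu A J₀ ℓ) < ∑ ℓ, min (d ℓ) (gmu A (insert j₀ J₀) ℓ) := by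
      have hc := hcond (insert j₀ J₀)
      rw [sum_insert hJ₀.1] at hc
      have := hJ₀.2
      simp only [htight] at this
      omega
    obtain ⟨ℓ₀, -, hℓ₀⟩ : ∃ ℓ₀ ∈ univ, min (d ℓ₀) (gmu A J₀ ℓ₀) < min (d ℓ₀) (gmu A (insert j₀ J₀) ℓ₀) := by
      by_contra h
      push_neg at h
      exact absurd (sum_le_sum h) (by omega)
    have hins : ∀ ℓ J, j₀ ∉ J → gmu A (insert j₀ J) ℓ = gmu A J ℓ + (if ℓ ∈ A j₀ then 1 else 0) := by
      intro ℓ J hJ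
      unfold gmu
      rw [filter_insert]
      split
      · rw [card_insert_of_notMem (fun h => hJ (mem_filter.mp h).1)]
      · simp
    have hℓ₀A : ℓ₀ ∈ A j₀ := by
      by_contra h
      rw [hins ℓ₀ J₀ hJ₀.1, if_neg h] at hℓ₀
      omega
    have hkey : gmu A J₀ ℓ₀ < d ℓ₀ := by
      rw [hins ℓ₀ J₀ hJ₀.1, if_pos hℓ₀A] at hℓ₀
      omega
    have hdℓ₀ : 0 < d ℓ₀ := by omega
    -- new instance
    set b' : ι → ℕ := Function.update b j₀ (b j₀ - 1) with hb'
    set d' : α → ℕ := Function.update d ℓ₀ (d ℓ₀ - 1) with hd'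
    set A' : ι → Finset α := Function.update A j₀ ((A j₀).erase ℓ₀) with hA'
    have hgmu' : ∀ (J : Finset ι) ℓ, gmu A' J ℓ =
        gmu A J ℓ - (if ℓ = ℓ₀ ∧ j₀ ∈ J then 1 else 0) := by
      intro J ℓ
      by_cases hc : ℓ = ℓ₀ ∧ j₀ ∈ J
      · obtain ⟨hceq, hj⟩ := hc
        rw [if_pos ⟨hceq, hj⟩, hceq]
        unfold gmu
        have : J.filter (fun j => ℓ₀ ∈ A' j) = (J.filter (fun j => ℓ₀ ∈ A j)).erase j₀ := by
          ext x
          simp only [mem_filter, mem_erase, hA']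
          constructor
          · rintro ⟨hx, hx2⟩
            rcases eq_or_ne x j₀ with rfl | hne
            · rw [Function.update_self] at hx2
              exact absurd hx2 (notMem_erase _ _)
            · rw [Function.update_of_ne hne] at hx2
              exact ⟨hne, hx, hx2⟩
          · rintro ⟨hne, hx, hx2⟩
            rw [Function.update_of_ne hne]
            exact ⟨hx, hx2⟩
        rw [this, card_erase_of_mem (mem_filter.mpr ⟨hj, hℓ₀A⟩)]
      · rw [if_neg hc]
        unfold gmu
        congr 1
        apply filter_congr
        intro x hx
        simp only [hA']
        rcases eq_or_ne x j₀ with rfl | hne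
        · rw [Function.update_self]
          rcases eq_or_ne ℓ ℓ₀ with rfl | hℓne
          · exact absurd ⟨rfl, hx⟩ hc
          · simp [mem_erase, hℓne]
        · rw [Function.update_of_ne hne]
    have hcond' : ∀ J : Finset ι, ∑ j ∈ J, b' j ≤ ∑ ℓ, min (d' ℓ) (gmu A' J ℓ) := by
      intro J
      by_cases hjJ : j₀ ∈ J
      · -- b drops 1, and the ℓ₀ term drops exactly 1
        have hbJ : ∑ j ∈ J, b' j = ∑ j ∈ J, b j - 1 := by
          rw [← sum_erase_add _ _ hjJ, ← sum_erase_add _ _ hjJ]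
          have h1 : ∑ j ∈ J.erase j₀, b' j = ∑ j ∈ J.erase j₀, b j :=
            sum_congr rfl (fun x hx => by
              rw [hb', Function.update_of_ne (ne_of_mem_erase hx)])
          rw [h1, hb', Function.update_self]
          omega
        have hμJ : 1 ≤ gmu A J ℓ₀ :=
          card_pos.mpr ⟨j₀, mem_filter.mpr ⟨hjJ, hℓ₀A⟩⟩
        have hsum' : ∑ ℓ, min (d ℓ) (gmu A J ℓ) ≤ ∑ ℓ, min (d' ℓ) (gmu A' J ℓ) + 1 := by
          rw [← add_sum_erase _ _ (mem_univ ℓ₀), ← add_sum_erase _ _ (mem_univ ℓ₀)]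
          have h1 : ∑ ℓ ∈ univ.erase ℓ₀, min (d' ℓ) (gmu A' J ℓ) =
              ∑ ℓ ∈ univ.erase ℓ₀, min (d ℓ) (gmu A J ℓ) := by
            refine sum_congr rfl (fun ℓ hℓ => ?_)
            have hne := ne_of_mem_erase hℓ
            rw [hd', Function.update_of_ne hne, hgmu' J ℓ, if_neg (by tauto)]
            simp
          rw [h1]
          have h2 := hgmu' J ℓ₀
          rw [if_pos ⟨rfl, hjJ⟩] at h2
          rw [hd', Function.update_self, h2]
          omega
        have := hcond J
        omega
      · -- b unchanged; J may be tight, then J ⊆ J₀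
        have hbJ : ∑ j ∈ J, b' j = ∑ j ∈ J, b j :=
          sum_congr rfl (fun x hx => by
            rw [hb', Function.update_of_ne (by rintro rfl; exact hjJ hx)])
        have hgmuJ : ∀ ℓ, gmu A' J ℓ = gmu A J ℓ := by
          intro ℓ; rw [hgmu' J ℓ, if_neg (by tauto)]; simp
        by_cases ht : tight J
        · have hJsub : J ⊆ J₀ := hJ₀max J hjJ ht
          have hsum' : ∑ ℓ, min (d' ℓ) (gmu A' J ℓ) = ∑ ℓ, min (d ℓ) (gmu A J ℓ) := by
            refine sum_congr rfl (fun ℓ _ => ?_)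
            rw [hgmuJ ℓ]
            rcases eq_or_ne ℓ ℓ₀ with rfl | hne
            · rw [hd', Function.update_self]
              have := gmu_mono A hJsub ℓ
              omega
            · rw [hd', Function.update_of_ne hne]
          simp only [htight] at ht
          omega
        · have hlt : ∑ j ∈ J, b j < ∑ ℓ, min (d ℓ) (gmu A J ℓ) :=
            lt_of_le_of_ne (hcond J) ht
          have hsum' : ∑ ℓ, min (d ℓ) (gmu A J ℓ) ≤ ∑ ℓ, min (d' ℓ) (gmu A' J ℓ) + 1 := by
            rw [← add_sum_erase _ _ (mem_univ ℓ₀), ← add_sum_erase _ _ (mem_univ ℓ₀)]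
            have h1 : ∑ ℓ ∈ univ.erase ℓ₀, min (d' ℓ) (gmu A' J ℓ) =
                ∑ ℓ ∈ univ.erase ℓ₀, min (d ℓ) (gmu A J ℓ) := by
              refine sum_congr rfl (fun ℓ hℓ => ?_)
              have hne := ne_of_mem_erase hℓ
              rw [hd', Function.update_of_ne hne, hgmuJ ℓ]
            rw [h1, hgmuJ ℓ₀, hd', Function.update_self]
            omega
          omega
    have hb'sum : ∑ j, b' j = N := by
      have : ∑ j, b' j + 1 = ∑ j, b j := by
        rw [← add_sum_erase _ _ (mem_univ j₀), ← add_sum_erase _ _ (mem_univ j₀)]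
        have h1 : ∑ j ∈ univ.erase j₀, b' j = ∑ j ∈ univ.erase j₀, b j :=
          sum_congr rfl (fun x hx => by rw [hb', Function.update_of_ne (ne_of_mem_erase hx)])
        rw [h1, hb', Function.update_self]
        omega
      omega
    have hd'sum : ∑ ℓ, d' ℓ = N := by
      have : ∑ ℓ, d' ℓ + 1 = ∑ ℓ, d ℓ := by
        rw [← add_sum_erase _ _ (mem_univ ℓ₀), ← add_sum_erase _ _ (mem_univ ℓ₀)]
        have h1 : ∑ ℓ ∈ univ.erase ℓ₀, d' ℓ = ∑ ℓ ∈ univ.erase ℓ₀, d ℓ :=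
          sum_congr rfl (fun x hx => by rw [hd', Function.update_of_ne (ne_of_mem_erase hx)])
        rw [h1, hd', Function.update_self]
        omega
      omega
    obtain ⟨w', hw'A, hw'card, hw'deg⟩ := ih b' d' A' hb'sum hd'sum hcond'
    have hno : ℓ₀ ∉ w' j₀ := fun h => by
      have := hw'A j₀ h
      rw [hA', Function.update_self] at this
      exact (notMem_erase _ _) this
    set w : ι → Finset α := fun j => if j = j₀ then insert ℓ₀ (w' j₀) else w' j with hw
    have hwj₀ : w j₀ = insert ℓ₀ (w' j₀) := by simp [hw]
    have hwne : ∀ j, j ≠ j₀ → w j = w' j := fun j hj => by simp [hw, hj]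
    refine ⟨w, ?_, ?_, ?_⟩
    · intro j
      rcases eq_or_ne j j₀ with rfl | hj
      · rw [hwj₀]
        intro x hx
        rcases mem_insert.mp hx with rfl | hx
        · exact hℓ₀A
        · have := hw'A j hx
          rw [hA', Function.update_self] at this
          exact mem_of_mem_erase this
      · rw [hwne j hj]
        intro x hx
        have := hw'A j hx
        rwa [hA', Function.update_of_ne hj] at this
    · intro j
      rcases eq_or_ne j j₀ with rfl | hj
      · rw [hwj₀, card_insert_of_notMem hno, hw'card j, hb', Function.update_self]
        omega
      · rw [hwne j hj, hw'card j, hb', Function.update_of_ne hj]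
    · intro ℓ
      rcases eq_or_ne ℓ ℓ₀ with rfl | hne
      · have : univ.filter (fun j => ℓ ∈ w j) = insert j₀ (univ.filter (fun j => ℓ ∈ w' j)) := by
          ext x
          simp only [mem_filter, mem_insert, mem_univ, true_and]
          rcases eq_or_ne x j₀ with rfl | hx
          · simp [hwj₀, hno]
          · rw [hwne x hx]
            simp [hx]
        rw [this, card_insert_of_notMem (by simp [hno]), hw'deg ℓ, hd', Function.update_self]
        omega
      · have : univ.filter (fun j => ℓ ∈ w j) = univ.filter (fun j => ℓ ∈ w' j) := by
          apply filter_congr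
          intro x _
          rcases eq_or_ne x j₀ with rfl | hx
          · rw [hwj₀]
            simp [mem_insert, hne]
          · rw [hwne x hx]
        rw [this, hw'deg ℓ, hd', Function.update_of_ne hne]

lemma swap_count (P : Finset ι) (Q : Finset α) (H : ι → Finset α) :
    ∑ j ∈ P, (Q.filter (fun ℓ => ℓ ∈ H j)).card = ∑ ℓ ∈ Q, (P.filter (fun j => ℓ ∈ H j)).card := by
  simp_rw [card_filter]
  exact Finset.sum_comm

lemma filter_mem_card (Q : Finset α) (s : Finset α) (h : s ⊆ Q) :
    (Q.filter (fun ℓ => ℓ ∈ s)).card = s.card := by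
  congr 1
  ext x
  simp only [mem_filter]
  exact ⟨fun h1 => h1.2, fun h1 => ⟨h h1, h1⟩⟩

section Peel

variable {n k : ℕ} (m : ℕ) (H : Fin n → Finset (Fin k))

/-- degree of a symbol in the set system H -/
def pdeg (H : Fin n → Finset (Fin k)) (ℓ : Fin k) : ℕ :=
  (univ.filter (fun j => ℓ ∈ H j)).card

lemma pdeg_sum : ∑ ℓ, pdeg H ℓ = ∑ j, (H j).card := by
  unfold pdeg
  rw [← swap_count]
  refine sum_congr rfl (fun j _ => ?_)
  exact filter_mem_card _ _ (subset_univ _)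

/-- Hall bound within the system: a set of columns sees many symbols. -/
lemma hall_bound (hm : 0 < m) (hcard : ∀ j, (H j).card = m)
    (hdeg : ∀ ℓ, pdeg H ℓ ≤ m) (Jr : Finset (Fin n)) :
    Jr.card ≤ (univ.filter (fun ℓ => ∃ j ∈ Jr, ℓ ∈ H j)).card := by
  set NH := univ.filter (fun ℓ => ∃ j ∈ Jr, ℓ ∈ H j) with hNH
  have h1 : Jr.card * m = ∑ j ∈ Jr, (H j).card := by
    simp only [hcard, sum_const, smul_eq_mul]
  have h2 : ∑ j ∈ Jr, (H j).card = ∑ ℓ ∈ NH, (Jr.filter (fun j => ℓ ∈ H j)).card := by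
    have hsw := swap_count Jr (univ : Finset (Fin k)) H
    have h3 : ∀ j, ((univ : Finset (Fin k)).filter (fun ℓ => ℓ ∈ H j)).card = (H j).card :=
      fun j => filter_mem_card _ _ (subset_univ _)
    simp only [h3] at hsw
    rw [hsw]
    rw [sum_filter_of_ne]
    intro x _ hx
    obtain ⟨j, hj⟩ := card_pos.mp (Nat.pos_of_ne_zero hx)
    rw [mem_filter] at hj
    exact ⟨j, hj.1, hj.2⟩
  have h4 : ∑ ℓ ∈ NH, (Jr.filter (fun j => ℓ ∈ H j)).card ≤ NH.card * m := by
    rw [← smul_eq_mul, ← sum_const]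
    refine sum_le_sum (fun ℓ _ => ?_)
    calc (Jr.filter (fun j => ℓ ∈ H j)).card ≤ (univ.filter (fun j => ℓ ∈ H j)).card :=
          card_le_card (filter_subset_filter _ (subset_univ _))
      _ ≤ m := hdeg ℓ
  have : Jr.card * m ≤ NH.card * m := by omega
  exact Nat.le_of_mul_le_mul_right this hm

/-- full-degree symbols missed by a set of columns are few. -/
lemma full_missed_bound (hm : 0 < m) (hcard : ∀ j, (H j).card = m) (Jr : Finset (Fin n)) :
    ((univ.filter (fun ℓ => pdeg H ℓ = m)) \
      (univ.filter (fun ℓ => ∃ j ∈ Jr, ℓ ∈ H j))).card ≤ n - Jr.card := by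
  set Full := univ.filter (fun ℓ => pdeg H ℓ = m) with hFull
  set NH := univ.filter (fun ℓ => ∃ j ∈ Jr, ℓ ∈ H j) with hNH
  have h1 : ∀ ℓ ∈ Full \ NH, pdeg H ℓ = ((univ \ Jr).filter (fun j => ℓ ∈ H j)).card := by
    intro ℓ hℓ
    rw [mem_sdiff, hNH, mem_filter] at hℓ
    obtain ⟨hℓF, hℓN⟩ := hℓ
    have hnot : ∀ j ∈ Jr, ℓ ∉ H j := by
      intro j hj hc
      exact hℓN (mem_filter.mpr ⟨mem_univ _, j, hj, hc⟩)
    unfold pdeg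
    congr 1
    ext j
    simp only [mem_filter, mem_sdiff, mem_univ, true_and]
    exact ⟨fun hj => ⟨fun hjJr => hnot j hjJr hj, hj⟩, fun hj => hj.2⟩
  have h2 : ∑ ℓ ∈ Full \ NH, pdeg H ℓ = (Full \ NH).card * m := by
    rw [sum_congr rfl (fun ℓ hℓ => ?_), sum_const, smul_eq_mul]
    rw [mem_sdiff, hFull, mem_filter] at hℓ
    exact hℓ.1.2
  have h3 : ∑ ℓ ∈ Full \ NH, pdeg H ℓ =
      ∑ j ∈ univ \ Jr, ((Full \ NH).filter (fun ℓ => ℓ ∈ H j)).card := by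
    rw [sum_congr rfl h1]
    exact (swap_count _ _ _).symm
  have h5 : ∑ j ∈ univ \ Jr, ((Full \ NH).filter (fun ℓ => ℓ ∈ H j)).card ≤
      (univ \ Jr).card * m := by
    rw [← smul_eq_mul, ← sum_const]
    refine sum_le_sum (fun j _ => ?_)
    calc ((Full \ NH).filter (fun ℓ => ℓ ∈ H j)).card
        ≤ ((univ : Finset (Fin k)).filter (fun ℓ => ℓ ∈ H j)).card :=
          card_le_card (filter_subset_filter _ (subset_univ _))
      _ = (H j).card := filter_mem_card _ _ (subset_univ _)
      _ = m := hcard j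
  have h6 : (univ \ Jr).card = n - Jr.card := by
    rw [card_sdiff_of_subset (subset_univ _)]
    simp
  rw [h6] at h5
  have h7 : (Full \ NH).card * m ≤ (n - Jr.card) * m := by omega
  exact Nat.le_of_mul_le_mul_right h7 hm

/-- Peel off one system of distinct representatives covering all symbols of
full degree. -/
lemma peel (hm : 0 < m) (hcard : ∀ j, (H j).card = m)
    (hdeg : ∀ ℓ, pdeg H ℓ ≤ m) :
    ∃ f : Fin n → Fin k, Function.Injective f ∧ (∀ j, f j ∈ H j) ∧
      ∀ ℓ, pdeg H ℓ = m → ∃ j, f j = ℓ := by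
  classical
  have htot : ∑ ℓ, pdeg H ℓ = n * m := by
    rw [pdeg_sum]
    simp only [hcard, sum_const, smul_eq_mul, card_univ, Fintype.card_fin]
  set k' : ℕ := (univ.filter (fun ℓ => 0 < pdeg H ℓ)).card with hk'
  have hnk' : n ≤ k' := by
    have h1 : ∑ ℓ, pdeg H ℓ = ∑ ℓ ∈ univ.filter (fun ℓ => 0 < pdeg H ℓ), pdeg H ℓ := by
      rw [sum_filter_of_ne]
      intro x _ hx
      omega
    have h2 : ∑ ℓ ∈ univ.filter (fun ℓ => 0 < pdeg H ℓ), pdeg H ℓ ≤ k' * m := by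
      rw [hk', ← smul_eq_mul, ← sum_const]
      exact sum_le_sum (fun ℓ _ => hdeg ℓ)
    have hle : n * m ≤ k' * m := by omega
    exact Nat.le_of_mul_le_mul_right hle hm
  set A : Option (Fin n) → Finset (Fin k) :=
    fun o => o.elim (univ.filter (fun ℓ => 0 < pdeg H ℓ ∧ pdeg H ℓ < m)) H with hA
  set b : Option (Fin n) → ℕ := fun o => o.elim (k' - n) (fun _ => 1) with hbdef
  set d : Fin k → ℕ := fun ℓ => if 0 < pdeg H ℓ then 1 else 0 with hd
  have hAnone : A none = univ.filter (fun ℓ => 0 < pdeg H ℓ ∧ pdeg H ℓ < m) := rfl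
  have hAsome : ∀ j, A (some j) = H j := fun _ => rfl
  have hbnone : b none = k' - n := rfl
  have hbsome : ∀ j, b (some j) = 1 := fun _ => rfl
  have hbsum : ∑ o, b o = k' := by
    rw [Fintype.sum_option]
    simp only [hbnone, hbsome, sum_const, smul_eq_mul, card_univ, Fintype.card_fin, mul_one]
    omega
  have hdsum : ∑ ℓ, d ℓ = k' := by
    rw [hk']
    rw [card_filter]
  have hApos : ∀ o ℓ, ℓ ∈ A o → 0 < pdeg H ℓ := by
    rintro (_ | j) ℓ hℓ
    · rw [hAnone, mem_filter] at hℓ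
      exact hℓ.2.1
    · rw [hAsome] at hℓ
      exact card_pos.mpr ⟨j, mem_filter.mpr ⟨mem_univ _, hℓ⟩⟩
  have hmin : ∀ (J : Finset (Option (Fin n))) ℓ,
      min (d ℓ) (gmu A J ℓ) = if 0 < gmu A J ℓ then 1 else 0 := by
    intro J ℓ
    by_cases h : 0 < gmu A J ℓ
    · rw [if_pos h]
      obtain ⟨o, ho⟩ := card_pos.mp h
      rw [mem_filter] at ho
      have hpos := hApos o ℓ ho.2
      have : d ℓ = 1 := if_pos hpos
      omega
    · rw [if_neg h]
      have h0 : gmu A J ℓ = 0 := by omega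
      rw [h0]
      simp
  have hcond : ∀ J : Finset (Option (Fin n)), ∑ o ∈ J, b o ≤ ∑ ℓ, min (d ℓ) (gmu A J ℓ) := by
    intro J
    have hs : ∑ ℓ, min (d ℓ) (gmu A J ℓ) = (univ.filter (fun ℓ => 0 < gmu A J ℓ)).card := by
      rw [card_filter]
      exact sum_congr rfl (fun ℓ _ => hmin J ℓ)
    rw [hs]
    set NJ := univ.filter (fun ℓ => 0 < gmu A J ℓ) with hNJ
    set Jr : Finset (Fin n) := univ.filter (fun j => some j ∈ J) with hJr
    set NH := univ.filter (fun ℓ => ∃ j ∈ Jr, ℓ ∈ H j) with hNH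
    -- the sum of b over J
    have hbJ : ∑ o ∈ J, b o = (if none ∈ J then k' - n else 0) + Jr.card := by
      rw [← sum_filter_add_sum_filter_not J (fun o => o = none)]
      congr 1
      · by_cases hno : none ∈ J
        · rw [if_pos hno]
          have : J.filter (fun o => o = none) = {none} := by
            ext o
            simp only [mem_filter, mem_singleton]
            exact ⟨fun h => h.2, fun h => ⟨h ▸ hno, h⟩⟩
          rw [this, sum_singleton, hbnone]
        · rw [if_neg hno]
          have : J.filter (fun o => o = none) = ∅ := by
            ext o
            simp only [mem_filter, notMem_empty, iff_false, not_and]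
            rintro ho rfl
            exact hno ho
          rw [this, sum_empty]
      · have himg : J.filter (fun o => ¬ o = none) = Jr.image some := by
          ext o
          match o with
          | none => simp
          | some a => simp [hJr]
        rw [himg, sum_image (fun a _ b _ h => Option.some_injective _ h)]
        simp only [hbsome, sum_const, smul_eq_mul, mul_one]
    have hNHsub : NH ⊆ NJ := by
      intro ℓ hℓ
      rw [hNH, mem_filter] at hℓ
      obtain ⟨-, j, hj, hℓj⟩ := hℓ
      rw [hJr, mem_filter] at hj
      rw [hNJ, mem_filter]
      refine ⟨mem_univ _, card_pos.mpr ⟨some j, mem_filter.mpr ⟨hj.2, ?_⟩⟩⟩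
      rw [hAsome]
      exact hℓj
    have hHall : Jr.card ≤ NH.card := hall_bound m H hm hcard hdeg Jr
    by_cases hnone : none ∈ J
    · rw [hbJ, if_pos hnone]
      set Full := univ.filter (fun ℓ => pdeg H ℓ = m) with hFull
      set Def := univ.filter (fun ℓ => 0 < pdeg H ℓ ∧ pdeg H ℓ < m) with hDef
      have hDefsub : Def ⊆ NJ := by
        intro ℓ hℓ
        rw [hNJ, mem_filter]
        refine ⟨mem_univ _, card_pos.mpr ⟨none, mem_filter.mpr ⟨hnone, ?_⟩⟩⟩
        rw [hAnone]
        exact hℓ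
      have hkey : (Full \ NH).card ≤ n - Jr.card := full_missed_bound m H hm hcard Jr
      have hsplit : k' = Def.card + Full.card := by
        rw [hk', hDef, hFull, ← card_union_of_disjoint]
        · congr 1
          ext x
          simp only [mem_union, mem_filter, mem_univ, true_and]
          have := hdeg x
          omega
        · rw [disjoint_filter]
          intro x _ h
          omega
      have hcard1 : Def.card + (NH ∩ Full).card ≤ NJ.card := by
        have hdisj : Disjoint Def (NH ∩ Full) := by
          rw [disjoint_left]
          intro x hx hx2
          simp only [hDef, hFull, mem_filter, mem_inter, mem_univ, true_and] at hx hx2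
          omega
        calc Def.card + (NH ∩ Full).card = (Def ∪ (NH ∩ Full)).card :=
              (card_union_of_disjoint hdisj).symm
          _ ≤ NJ.card := card_le_card (union_subset hDefsub
              (fun x hx => hNHsub (mem_inter.mp hx).1))
      have hNHdecomp : NH.card = (NH ∩ Def).card + (NH ∩ Full).card := by
        have hdisj : Disjoint (NH ∩ Def) (NH ∩ Full) := by
          rw [disjoint_left]
          intro x hx hx2
          simp only [hDef, hFull, mem_filter, mem_inter, mem_univ, true_and] at hx hx2
          omega
        rw [← card_union_of_disjoint hdisj]
        congr 1
        ext x
        simp only [mem_union, mem_inter, hDef, hFull, mem_filter, mem_univ, true_and]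
        constructor
        · intro hx
          have hxpos : 0 < pdeg H x := by
            rw [hNH, mem_filter] at hx
            obtain ⟨-, j, hj, hxj⟩ := hx
            exact card_pos.mpr ⟨j, mem_filter.mpr ⟨mem_univ _, hxj⟩⟩
          have hxm := hdeg x
          by_cases hc : pdeg H x < m
          · exact Or.inl ⟨hx, hxpos, hc⟩
          · exact Or.inr ⟨hx, by omega⟩
        · rintro (hx | hx) <;> exact hx.1
      have hFullNH : Full.card = (NH ∩ Full).card + (Full \ NH).card := by
        have hdisj : Disjoint (NH ∩ Full) (Full \ NH) := by
          rw [disjoint_left]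
          intro x hx hx2
          rw [mem_inter] at hx
          rw [mem_sdiff] at hx2
          exact hx2.2 hx.1
        rw [← card_union_of_disjoint hdisj]
        congr 1
        ext x
        simp only [mem_union, mem_inter, mem_sdiff]
        tauto
      have hJrn : Jr.card ≤ n := by
        calc Jr.card ≤ (univ : Finset (Fin n)).card := card_le_card (subset_univ _)
          _ = n := by simp
      omega
    · rw [hbJ, if_neg hnone]
      simp only [zero_add]
      exact hHall.trans (card_le_card hNHsub)
  obtain ⟨w, hwA, hwcard, hwdeg⟩ := gale k' b d A hbsum hdsum hcond
  have hone : ∀ j : Fin n, ∃ a, w (some j) = {a} := by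
    intro j
    rw [← card_eq_one, hwcard (some j)]
    exact hbsome j
  choose f hf using hone
  have hfH : ∀ j, f j ∈ H j := by
    intro j
    have h1 : f j ∈ w (some j) := by rw [hf j]; exact mem_singleton_self _
    have h2 := hwA (some j) h1
    rwa [hAsome] at h2
  have hdle : ∀ ℓ, (univ.filter (fun o => ℓ ∈ w o)).card ≤ 1 := by
    intro ℓ
    rw [hwdeg ℓ]
    have hdl : d ℓ = if 0 < pdeg H ℓ then 1 else 0 := rfl
    rw [hdl]
    split <;> omega
  refine ⟨f, ?_, hfH, ?_⟩
  · intro j1 j2 hj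
    have h1 : some j1 ∈ univ.filter (fun o => f j1 ∈ w o) :=
      mem_filter.mpr ⟨mem_univ _, by rw [hf j1]; exact mem_singleton_self _⟩
    have h2 : some j2 ∈ univ.filter (fun o => f j1 ∈ w o) :=
      mem_filter.mpr ⟨mem_univ _, by rw [hf j2, hj]; exact mem_singleton_self _⟩
    have := card_le_one.mp (hdle (f j1)) _ h1 _ h2
    exact Option.some_injective _ this
  · intro ℓ hℓ
    have hdpos : 0 < pdeg H ℓ := by omega
    have hd1 : d ℓ = 1 := if_pos hdpos
    have hp : 0 < (univ.filter (fun o => ℓ ∈ w o)).card := by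
      rw [hwdeg ℓ, hd1]
      omega
    obtain ⟨o, ho⟩ := card_pos.mp hp
    rw [mem_filter] at ho
    match o, ho with
    | some j, ho =>
      refine ⟨j, ?_⟩
      have h1 := ho.2
      have h2 : w (some j) = {f j} := hf j
      rw [h2, mem_singleton] at h1
      exact h1.symm
    | none, ho =>
      exfalso
      have h1 := hwA none ho.2
      rw [hAnone, mem_filter] at h1
      omega

lemma decompose {n k : ℕ} : ∀ (m : ℕ) (H : Fin n → Finset (Fin k)),
    (∀ j, (H j).card = m) → (∀ ℓ, pdeg H ℓ ≤ m) →
    ∃ g : Fin m → Fin n → Fin k, (∀ i, Function.Injective (g i)) ∧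
      (∀ j, (univ : Finset (Fin m)).image (fun i => g i j) = H j) := by
  intro m
  induction m with
  | zero =>
    intro H hcard _
    refine ⟨fun i => i.elim0, fun i => i.elim0, fun j => ?_⟩
    rw [univ_eq_empty, image_empty]
    exact (card_eq_zero.mp (hcard j)).symm
  | succ m ih =>
    intro H hcard hdeg
    obtain ⟨f, hfinj, hfH, hfcover⟩ := peel (m + 1) H (Nat.succ_pos m) hcard hdeg
    set H' : Fin n → Finset (Fin k) := fun j => (H j).erase (f j) with hH'
    have hcard' : ∀ j, (H' j).card = m := by
      intro j
      show ((H j).erase (f j)).card = m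
      rw [card_erase_of_mem (hfH j), hcard j]
      omega
    have hdeg' : ∀ ℓ, pdeg H' ℓ ≤ m := by
      intro ℓ
      by_cases hrange : ∃ j₀, f j₀ = ℓ
      · obtain ⟨j₀, hj₀⟩ := hrange
        have hsub : univ.filter (fun j => ℓ ∈ H' j) ⊆
            (univ.filter (fun j => ℓ ∈ H j)).erase j₀ := by
          intro j hj
          rw [mem_filter, hH'] at hj
          simp only at hj
          rw [mem_erase] at hj ⊢
          refine ⟨fun hc => ?_, mem_filter.mpr ⟨mem_univ _, hj.2.2⟩⟩
          · subst hc
            exact hj.2.1 hj₀.symm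
        have h1 : pdeg H' ℓ ≤ ((univ.filter (fun j => ℓ ∈ H j)).erase j₀).card :=
          card_le_card hsub
        have hj₀mem : j₀ ∈ univ.filter (fun j => ℓ ∈ H j) :=
          mem_filter.mpr ⟨mem_univ _, hj₀ ▸ hfH j₀⟩
        rw [card_erase_of_mem hj₀mem] at h1
        have := hdeg ℓ
        unfold pdeg at *
        omega
      · have hne : pdeg H ℓ ≠ m + 1 := fun hc => hrange (hfcover ℓ hc)
        have hsub : univ.filter (fun j => ℓ ∈ H' j) ⊆ univ.filter (fun j => ℓ ∈ H j) := by
          intro j hj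
          rw [mem_filter] at hj ⊢
          exact ⟨hj.1, mem_of_mem_erase hj.2⟩
        have h1 : pdeg H' ℓ ≤ pdeg H ℓ := card_le_card hsub
        have := hdeg ℓ
        omega
    obtain ⟨g', hg'inj, hg'img⟩ := ih H' hcard' hdeg'
    set G : Fin (m + 1) → Fin n → Fin k := Fin.snoc (α := fun _ => Fin n → Fin k) g' f with hG
    have hGlast : G (Fin.last m) = f := Fin.snoc_last _ _
    have hGcast : ∀ i : Fin m, G (Fin.castSucc i) = g' i := fun i => Fin.snoc_castSucc _ _ i
    refine ⟨G, ?_, ?_⟩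
    · intro i
      refine Fin.lastCases ?_ ?_ i
      · rw [hGlast]
        exact hfinj
      · intro i'
        rw [hGcast]
        exact hg'inj i'
    · intro j
      have huniv : (univ : Finset (Fin (m + 1))) =
          insert (Fin.last m) (univ.image Fin.castSucc) := by
        ext i
        refine ⟨fun _ => mem_insert.mpr ?_, fun _ => mem_univ _⟩
        rcases Fin.eq_castSucc_or_eq_last i with ⟨j', hj'⟩ | h
        · exact Or.inr (mem_image.mpr ⟨j', mem_univ _, hj'.symm⟩)
        · exact Or.inl h
      rw [huniv, image_insert, image_image]
      have h2 : ((fun i => G i j) ∘ Fin.castSucc) = fun i => g' i j := by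
        funext i
        simp only [Function.comp_apply, hGcast]
      rw [hGlast, h2, hg'img j, hH']
      exact insert_erase (hfH j)

end Peel


lemma swap_count' {ι α : Type*} (P : Finset ι) (Q : Finset α) (R : ι → α → Prop)
    [∀ i a, Decidable (R i a)] :
    ∑ j ∈ P, (Q.filter (fun ℓ => R j ℓ)).card = ∑ ℓ ∈ Q, (P.filter (fun j => R j ℓ)).card := by
  simp_rw [card_filter]
  exact Finset.sum_comm

lemma symCount_rows {r s k : ℕ} (M : Fin r → Fin s → Fin k) (ℓ : Fin k) :
    symCount M ℓ = ∑ i, (univ.filter (fun j => M i j = ℓ)).card := by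
  unfold symCount
  rw [card_filter, Fintype.sum_prod_type]
  simp_rw [card_filter]

lemma symCount_total {r s k : ℕ} (M : Fin r → Fin s → Fin k) :
    ∑ ℓ, symCount M ℓ = r * s := by
  unfold symCount
  rw [← card_eq_sum_card_fiberwise (f := fun p : Fin r × Fin s => M p.1 p.2)
    (t := univ) (fun p _ => mem_univ _)]
  simp

lemma rowOcc_le_one {r s k : ℕ} (M : Fin r → Fin s → Fin k) (i : Fin r) (ℓ : Fin k)
    (hinj : Function.Injective (M i)) :
    (univ.filter (fun j => M i j = ℓ)).card ≤ 1 := by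
  rw [card_le_one]
  intro a ha b hb
  rw [mem_filter] at ha hb
  exact hinj (ha.2.trans hb.2.symm)

lemma col_count {m n k : ℕ} (g : Fin m → Fin n → Fin k) (j : Fin n)
    (hinj : Function.Injective (fun b => g b j)) (Hj : Finset (Fin k))
    (himg : (univ : Finset (Fin m)).image (fun b => g b j) = Hj) (ℓ : Fin k) :
    (univ.filter (fun b => g b j = ℓ)).card = if ℓ ∈ Hj then 1 else 0 := by
  split
  case isTrue h =>
    rw [← himg, mem_image] at h
    obtain ⟨b, -, hb⟩ := h
    rw [card_eq_one]
    refine ⟨b, ?_⟩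
    ext x
    simp only [mem_filter, mem_univ, true_and, mem_singleton]
    constructor
    · intro hx
      exact hinj (hx.trans hb.symm)
    · rintro rfl
      exact hb
  case isFalse h =>
    rw [card_eq_zero]
    ext x
    simp only [mem_filter, mem_univ, true_and, notMem_empty, iff_false]
    intro hx
    exact h (himg ▸ mem_image.mpr ⟨x, mem_univ _, hx⟩)


end Aux

/-- Hall-type completion: an `r × n` `ρ`-latin rectangle completes to an
`n × n` `ρ`-latin square iff `ρ_ℓ - e_ℓ ≤ n - r` for all `ℓ` and
`|J|(n-r) ≤ ∑_ℓ min{ρ_ℓ - e_ℓ, μ_J(ℓ)}` for all column sets `J`. -/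
theorem stmt4 (n k r : ℕ) (hr : 1 ≤ r) (hrn : r < n) (hnk : n ≤ k)
    (ρ : Fin k → ℕ) (hρ1 : ∀ ℓ, 1 ≤ ρ ℓ) (hρn : ∀ ℓ, ρ ℓ ≤ n)
    (hsum : ∑ ℓ, ρ ℓ = n ^ 2)
    (L : Fin r → Fin n → Fin k) (hL : latinArr L)
    (he : ∀ ℓ, symCount L ℓ ≤ ρ ℓ) :
    (∃ S : Fin n → Fin n → Fin k, rhoLatinSquare ρ S ∧ extends' hrn.le le_rfl L S) ↔
      ((∀ ℓ, ρ ℓ - symCount L ℓ ≤ n - r) ∧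
        ∀ J : Finset (Fin n),
          J.card * (n - r) ≤ ∑ ℓ, min (ρ ℓ - symCount L ℓ) (muCols L J ℓ)) := by
  classical
  set m : ℕ := n - r with hm
  have hm0 : 0 < m := by omega
  have hn : n = r + m := by omega
  set e : Fin n ≃ (Fin r ⊕ Fin m) := (finCongr hn).trans finSumFinEquiv.symm with hedef
  have hecast : ∀ a : Fin r, e (Fin.castLE hrn.le a) = Sum.inl a := by
    intro a
    rw [hedef, Equiv.trans_apply]
    have h1 : finCongr hn (Fin.castLE hrn.le a) = Fin.castAdd m a := by
      apply Fin.ext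
      rfl
    rw [h1, finSumFinEquiv_symm_apply_castAdd]
  constructor
  · -- forward direction
    rintro ⟨S, ⟨⟨hSrow, hScol⟩, hScount⟩, hSext⟩
    -- top rows of S agree with L
    have htop : ∀ (a : Fin r) (j : Fin n), S (e.symm (Sum.inl a)) j = L a j := by
      intro a j
      have h1 : e.symm (Sum.inl a) = Fin.castLE hrn.le a := by
        rw [← hecast a, Equiv.symm_apply_apply]
      rw [h1]
      have h2 := hSext a j
      have h3 : Fin.castLE (le_refl n) j = j := by
        apply Fin.ext
        rfl
      rwa [h3] at h2
    set B : Fin m → Fin n → Fin k := fun b j => S (e.symm (Sum.inr b)) j with hB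
    -- symCount decomposition
    have hdecomp : ∀ ℓ, symCount S ℓ = symCount L ℓ +
        ∑ b : Fin m, (univ.filter (fun j => B b j = ℓ)).card := by
      intro ℓ
      rw [symCount_rows S ℓ]
      rw [← Equiv.sum_comp e.symm (fun i => (univ.filter (fun j => S i j = ℓ)).card)]
      rw [Fintype.sum_sum_type]
      congr 1
      · rw [symCount_rows L ℓ]
        refine Finset.sum_congr rfl (fun a _ => ?_)
        congr 1
        apply filter_congr
        intro j _
        rw [htop a j]
    -- each bottom row has ≤ 1 occurrence of ℓ
    have hble : ∀ ℓ, ∑ b : Fin m, (univ.filter (fun j => B b j = ℓ)).card ≤ m := by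
      intro ℓ
      calc ∑ b : Fin m, (univ.filter (fun j => B b j = ℓ)).card
          ≤ ∑ _b : Fin m, 1 :=
            Finset.sum_le_sum (fun b _ => rowOcc_le_one B b ℓ (hSrow _))
        _ = m := by simp
    have hA : ∀ ℓ, ρ ℓ - symCount L ℓ ≤ n - r := by
      intro ℓ
      have h1 := hdecomp ℓ
      rw [hScount ℓ] at h1
      have h2 := hble ℓ
      omega
    refine ⟨hA, ?_⟩
    intro J
    -- bottom counts restricted to J
    set bcJ : Fin k → ℕ := fun ℓ => ∑ b : Fin m, (J.filter (fun j => B b j = ℓ)).card with hbcJ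
    have htotJ : ∑ ℓ, bcJ ℓ = J.card * m := by
      simp only [hbcJ]
      rw [Finset.sum_comm]
      have h1 : ∀ b : Fin m, ∑ ℓ, (J.filter (fun j => B b j = ℓ)).card = J.card := by
        intro b
        rw [← card_eq_sum_card_fiberwise (f := fun j => B b j) (t := univ)
          (fun j _ => mem_univ _)]
      rw [Finset.sum_congr rfl (fun b _ => h1 b)]
      simp [mul_comm]
    have hbc1 : ∀ ℓ, bcJ ℓ ≤ ρ ℓ - symCount L ℓ := by
      intro ℓ
      have h1 := hdecomp ℓ
      rw [hScount ℓ] at h1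
      have h2 : bcJ ℓ ≤ ∑ b : Fin m, (univ.filter (fun j => B b j = ℓ)).card := by
        simp only [hbcJ]
        exact Finset.sum_le_sum (fun b _ =>
          card_le_card (filter_subset_filter _ (subset_univ _)))
      omega
    have hbc2 : ∀ ℓ, bcJ ℓ ≤ muCols L J ℓ := by
      intro ℓ
      simp only [hbcJ]
      have hswap : ∑ b ∈ (univ : Finset (Fin m)), (J.filter (fun j => B b j = ℓ)).card
          = ∑ j ∈ J, ((univ : Finset (Fin m)).filter (fun b => B b j = ℓ)).card :=
        swap_count' univ J (fun b j => B b j = ℓ)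
      rw [hswap]
      unfold muCols
      rw [card_filter]
      refine Finset.sum_le_sum (fun j hj => ?_)
      by_cases hmiss : ∀ i, L i j ≠ ℓ
      · rw [if_pos hmiss]
        rw [card_le_one]
        intro a ha b hb
        rw [mem_filter] at ha hb
        have h1 : S (e.symm (Sum.inr a)) j = S (e.symm (Sum.inr b)) j :=
          ha.2.trans hb.2.symm
        have h2 := hScol j h1
        have h3 := e.symm.injective h2
        exact Sum.inr_injective h3
      · rw [if_neg hmiss]
        push_neg at hmiss
        obtain ⟨i, hi⟩ := hmiss
        rw [Nat.le_zero, card_eq_zero]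
        ext b
        simp only [mem_filter, mem_univ, true_and, notMem_empty, iff_false]
        intro hb
        have h1 : S (e.symm (Sum.inr b)) j = S (e.symm (Sum.inl i)) j := by
          rw [htop i j, hi]
          exact hb
        have h2 := hScol j h1
        have h3 := e.symm.injective h2
        cases h3
    calc J.card * (n - r) = ∑ ℓ, bcJ ℓ := htotJ.symm
      _ ≤ ∑ ℓ, min (ρ ℓ - symCount L ℓ) (muCols L J ℓ) :=
          Finset.sum_le_sum (fun ℓ _ => le_min (hbc1 ℓ) (hbc2 ℓ))
  · -- backward direction
    rintro ⟨hA, hJ⟩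
    set d : Fin k → ℕ := fun ℓ => ρ ℓ - symCount L ℓ with hd
    set Al : Fin n → Finset (Fin k) := fun j => univ.filter (fun ℓ => ∀ i, L i j ≠ ℓ) with hAl
    have hmemA : ∀ j ℓ, ℓ ∈ Al j ↔ ∀ i, L i j ≠ ℓ := by
      intro j ℓ
      simp only [hAl, mem_filter, mem_univ, true_and]
    have hgmu_mu : ∀ (J : Finset (Fin n)) ℓ, gmu Al J ℓ = muCols L J ℓ := by
      intro J ℓ
      unfold gmu muCols
      congr 1
      apply filter_congr
      intro j _
      simp only [hmemA]
    have hbsum : ∑ _j : Fin n, m = n * m := by simp [mul_comm]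
    have hLsum : ∑ ℓ, symCount L ℓ = r * n := symCount_total L
    have hdsum : ∑ ℓ, d ℓ = n * m := by
      have h1 : ∀ ℓ, symCount L ℓ + d ℓ = ρ ℓ := by
        intro ℓ
        have := he ℓ
        simp only [hd]
        omega
      have h2 : ∑ ℓ, (symCount L ℓ + d ℓ) = ∑ ℓ, ρ ℓ :=
        Finset.sum_congr rfl (fun ℓ _ => h1 ℓ)
      rw [Finset.sum_add_distrib, hLsum, hsum] at h2
      have h3 : n ^ 2 = n * n := sq n
      have h4 : n * m + r * n = n * n := by
        rw [hn]
        ring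
      omega
    have hcond : ∀ J : Finset (Fin n), ∑ _j ∈ J, m ≤ ∑ ℓ, min (d ℓ) (gmu Al J ℓ) := by
      intro J
      rw [Finset.sum_const, smul_eq_mul]
      have h1 := hJ J
      rw [Finset.sum_congr rfl (fun ℓ _ => by rw [hgmu_mu J ℓ])]
      have hmm : m = n - r := hm
      calc J.card * m = J.card * (n - r) := by rw [hmm]
        _ ≤ ∑ ℓ, min (ρ ℓ - symCount L ℓ) (muCols L J ℓ) := h1
        _ = ∑ ℓ, min (d ℓ) (muCols L J ℓ) := rfl
    obtain ⟨H, hHA, hHcard, hHdeg⟩ := gale (n * m) (fun _ => m) d Al hbsum hdsum hcond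
    have hpdeg : ∀ ℓ, pdeg H ℓ = d ℓ := fun ℓ => hHdeg ℓ
    have hpdeg_le : ∀ ℓ, pdeg H ℓ ≤ m := by
      intro ℓ
      rw [hpdeg ℓ, hd]
      exact hA ℓ
    obtain ⟨g, hginj, hgimg⟩ := decompose m H hHcard hpdeg_le
    -- column injectivity of g
    have hgcol : ∀ j, Function.Injective (fun b => g b j) := by
      intro j
      have h1 : ((univ : Finset (Fin m)).image (fun b => g b j)).card = (univ : Finset (Fin m)).card := by
        rw [hgimg j, hHcard j]
        simp
      have h2 := Finset.injOn_of_card_image_eq h1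
      intro a b hab
      exact h2 (mem_coe.mpr (mem_univ a)) (mem_coe.mpr (mem_univ b)) hab
    have hgmem : ∀ b j, g b j ∈ H j := by
      intro b j
      rw [← hgimg j]
      exact mem_image.mpr ⟨b, mem_univ _, rfl⟩
    have hgmiss : ∀ b j i, L i j ≠ g b j := by
      intro b j i
      have h1 := hHA j (hgmem b j)
      rw [hmemA] at h1
      exact h1 i
    refine ⟨fun i j => Sum.elim (fun a => L a j) (fun b => g b j) (e i), ⟨⟨?_, ?_⟩, ?_⟩, ?_⟩
    · -- rows injective
      intro i
      rcases hei : e i with a | b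
      · intro x y hxy
        simp only [hei, Sum.elim_inl] at hxy
        exact hL.1 a hxy
      · intro x y hxy
        simp only [hei, Sum.elim_inr] at hxy
        exact hginj b hxy
    · -- columns injective
      intro j i1 i2 h12
      simp only at h12
      rcases he1 : e i1 with a1 | b1 <;> rcases he2 : e i2 with a2 | b2 <;>
        rw [he1, he2] at h12 <;> simp only [Sum.elim_inl, Sum.elim_inr] at h12
      · apply e.injective
        rw [he1, he2]
        exact congrArg Sum.inl (hL.2 j h12)
      · exact absurd h12 (hgmiss b2 j a1)
      · exact absurd h12.symm (hgmiss b1 j a2)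
      · apply e.injective
        rw [he1, he2]
        exact congrArg Sum.inr (hgcol j h12)
    · -- symbol counts
      intro ℓ
      rw [symCount_rows]
      rw [← Equiv.sum_comp e.symm (fun i => (univ.filter (fun j =>
        Sum.elim (fun a => L a j) (fun b => g b j) (e i) = ℓ)).card)]
      have hsimp : ∀ x : Fin r ⊕ Fin m,
          (univ.filter (fun j => Sum.elim (fun a => L a j) (fun b => g b j) (e (e.symm x)) = ℓ)).card
          = (univ.filter (fun j => Sum.elim (fun a => L a j) (fun b => g b j) x = ℓ)).card := by
        intro x
        rw [Equiv.apply_symm_apply]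
      rw [Finset.sum_congr rfl (fun x _ => hsimp x)]
      rw [Fintype.sum_sum_type]
      have h1 : ∑ a : Fin r, (univ.filter (fun j =>
          Sum.elim (fun a' => L a' j) (fun b => g b j) (Sum.inl a) = ℓ)).card = symCount L ℓ := by
        rw [symCount_rows L ℓ]
        simp only [Sum.elim_inl]
        rfl
      have h2 : ∑ b : Fin m, (univ.filter (fun j =>
          Sum.elim (fun a' => L a' j) (fun b' => g b' j) (Sum.inr b) = ℓ)).card = d ℓ := by
        have hsw : ∑ b ∈ (univ : Finset (Fin m)), ((univ : Finset (Fin n)).filter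
            (fun j => g b j = ℓ)).card = ∑ j ∈ (univ : Finset (Fin n)),
            ((univ : Finset (Fin m)).filter (fun b => g b j = ℓ)).card :=
          swap_count' univ univ (fun b j => g b j = ℓ)
        simp only [Sum.elim_inr]
        refine Eq.trans hsw ?_
        rw [Finset.sum_congr rfl (fun j _ => col_count g j (hgcol j) (H j) (hgimg j) ℓ)]
        rw [← card_filter]
        exact hHdeg ℓ
      rw [h1, h2]
      have := he ℓ
      simp only [hd]
      omega
    · -- extends
      intro a j
      have h3 : Fin.castLE (le_refl n) j = j := by
        apply Fin.ext
        rfl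
      rw [h3]
      simp only [hecast a, Sum.elim_inl]
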